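/- If there exists a Luzin set in 2^ω, then 2^ω does not have the Grinzing property: a Luzin set L witnesses that one cannot find ω₁-many uncountable subsets of L with pairwise disjoint closures in 2^ω. -/

import Mathlib

/-- `L` is a Luzin set in the ambient space: it is uncountable and all of its
uncountable subsets are non-meager. -/
def IsLuzin {T : Type} [TopologicalSpace T] (L : Set T) : Prop :=
  ¬ L.Countable ∧ ∀ A ⊆ L, ¬ A.Countable → ¬ IsMeagre A

theorem luzin_witnesses_failure_of_grinzing (L : Set (ℕ → Bool)) (hL : IsLuzin L) :
    ¬ ∃ Yf : Set.Iio (Cardinal.aleph 1).ord → Set (ℕ → Bool),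
      (∀ α, Yf α ⊆ L ∧ ¬ (Yf α).Countable) ∧
      (∀ α β, α ≠ β → closure (Yf α) ∩ closure (Yf β) = ∅) := by
  rintro ⟨Yf, h1, h2⟩
  -- each Yf α is non-meager, hence not nowhere dense, so interior of closure is nonempty
  have hne : ∀ α, (interior (closure (Yf α))).Nonempty := by
    intro α
    rw [Set.nonempty_iff_ne_empty]
    intro hnd
    have hmeag : IsMeagre (Yf α) := by
      rw [isMeagre_iff_countable_union_isNowhereDense]
      exact ⟨{closure (Yf α)}, by simpa [IsNowhereDense, closure_closure] using hnd,
        Set.countable_singleton _, by simp [subset_closure]⟩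
    exact hL.2 (Yf α) (h1 α).1 (h1 α).2 hmeag
  have hd : Pairwise (Function.onFun Disjoint fun α => interior (closure (Yf α))) := by
    intro α β hab
    simp only [Function.onFun, Set.disjoint_iff_inter_eq_empty]
    have := h2 α β hab
    have hsub : interior (closure (Yf α)) ∩ interior (closure (Yf β)) ⊆
        closure (Yf α) ∩ closure (Yf β) :=
      Set.inter_subset_inter interior_subset interior_subset
    rw [this] at hsub
    exact Set.subset_eq_empty hsub rfl
  have hcnt : Countable (Set.Iio (Cardinal.aleph 1).ord) :=
    hd.countable_of_isOpen_disjoint (fun _ => isOpen_interior) hne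
  have hle := @Cardinal.mk_le_aleph0 _ hcnt
  rw [Ordinal.mk_Iio_ordinal, Cardinal.card_ord, Cardinal.lift_le_aleph0] at hle
  exact absurd hle (not_le.2 Cardinal.aleph0_lt_aleph_one)
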